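/- Let (ξ_l)_{l≥0} be a sequence of independent, integrable real-valued random variables on a probability space. Suppose there are real numbers (a_l)_{l≥0} and a real number a such that E[ξ_0] = a_0, E[ξ_l] = a_l − a_{l−1} for every l ≥ 1, and a_l → a as l → ∞, and suppose there exist constants C < ∞ and β > 0 such that E[ξ_l²] ≤ C · 2^{−2βl} for every l ≥ 0. Then there exists a probability mass function p on ℕ with p(l) > 0 for all l such that, for any ℕ-valued random variable L with law p independent of (ξ_l), the single-term estimator Z := ξ_L / p(L) is square-integrable with E[Z] = a; that is, Z is an unbiased, finite-variance estimator of a. -/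

import Mathlib

open MeasureTheory ProbabilityTheory Filter

/-- main theorem, single-term form: if the independent increment
estimators `ξ_l` are unbiased for the increments `a_l − a_{l−1}` with
`a_l → a`, and their second moments decay geometrically,
`E[ξ_l²] ≤ C 2^{−2βl}`, then there is a positive probability mass function `p`
on ℕ such that for every `L ∼ p` independent of `(ξ_l)` the single-term
estimator `ξ_L / p(L)` is square-integrable and unbiased for `a`. -/
theorem exists_pmf_single_term_estimator_unbiased
    {Ω : Type*} [MeasurableSpace Ω] (P : Measure Ω) [IsProbabilityMeasure P]
    (ξ : ℕ → Ω → ℝ) (hξmeas : ∀ l, Measurable (ξ l))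
    (hξint : ∀ l, Integrable (ξ l) P)
    (hξindep : iIndepFun ξ P)
    (a : ℕ → ℝ) (alim : ℝ)
    (ha0 : ∫ ω, ξ 0 ω ∂P = a 0)
    (hainc : ∀ l : ℕ, 1 ≤ l → ∫ ω, ξ l ω ∂P = a l - a (l - 1))
    (halim : Tendsto a atTop (nhds alim))
    (hξ2 : ∀ l, MemLp (ξ l) 2 P)
    (C β : ℝ) (hβ : 0 < β)
    (hmom : ∀ l : ℕ, ∫ ω, (ξ l ω) ^ 2 ∂P ≤ C * ((2 : ℝ) ^ (-(2 * β * l)))) :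
    ∃ p : ℕ → ℝ, (∀ l, 0 < p l) ∧ (∑' l, p l = 1) ∧
      ∀ L : Ω → ℕ, Measurable L →
        (∀ l, P {ω | L ω = l} = ENNReal.ofReal (p l)) →
        IndepFun L (fun ω => fun l => ξ l ω) P →
        MemLp (fun ω => ξ (L ω) ω / p (L ω)) 2 P ∧
        ∫ ω, ξ (L ω) ω / p (L ω) ∂P = alim := by
  set r : ℝ := (2 : ℝ) ^ (-β) with hr_def
  have hr0 : 0 < r := Real.rpow_pos_of_pos two_pos _
  have hr1 : r < 1 := Real.rpow_lt_one_of_one_lt_of_neg one_lt_two (by linarith)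
  set p : ℕ → ℝ := fun l => (1 - r) * r ^ l with hp_def
  have hpl : ∀ l, 0 < p l := fun l => by
    have : 0 < r ^ l := pow_pos hr0 l
    have : 0 < 1 - r := by linarith
    positivity
  -- the decay rate rewritten in terms of `r`
  have hrl : ∀ l : ℕ, (2 : ℝ) ^ (-(2 * β * (l : ℝ))) = (r ^ l) ^ 2 := by
    intro l
    rw [hr_def, ← Real.rpow_natCast ((2 : ℝ) ^ (-β)) l, ← Real.rpow_mul (by norm_num),
      ← Real.rpow_natCast _ 2, ← Real.rpow_mul (by norm_num)]
    norm_num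
    ring_nf
  have hC : 0 ≤ C := by
    have h0 := hmom 0
    have : (0 : ℝ) ≤ ∫ ω, (ξ 0 ω) ^ 2 ∂P := integral_nonneg fun ω => sq_nonneg _
    simpa using this.trans h0
  refine ⟨p, hpl, ?_, ?_⟩
  · rw [hp_def]
    rw [tsum_mul_left, tsum_geometric_of_lt_one hr0.le hr1]
    rw [mul_inv_cancel₀ (by linarith : (1:ℝ) - r ≠ 0)]
  intro L hL hlaw hind
  set Z : Ω → ℝ := fun ω => ξ (L ω) ω / p (L ω) with hZ_def
  set s : ℕ → Set Ω := fun l => L ⁻¹' {l} with hs_def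
  have hsmeas : ∀ l, MeasurableSet (s l) := fun l => hL (measurableSet_singleton l)
  have hsP : ∀ l, P (s l) = ENNReal.ofReal (p l) := fun l => hlaw l
  have hUnion : (⋃ l, s l) = Set.univ := by
    ext ω; simp [hs_def]
  have hdisj : Pairwise (Function.onFun Disjoint s) := by
    intro i j hij
    refine Set.disjoint_left.mpr fun ω hi hj => hij ?_
    have hi' : L ω = i := hi
    have hj' : L ω = j := hj
    rw [← hi', hj']
  have hind_l : ∀ l, IndepFun L (ξ l) P := by
    intro l
    have := hind.comp measurable_id (measurable_pi_apply l)
    exact this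
  -- law factorization on each piece
  have map_eq : ∀ l, Measure.map (ξ l) (P.restrict (s l))
      = ENNReal.ofReal (p l) • Measure.map (ξ l) P := by
    intro l
    ext B hB
    rw [Measure.map_apply (hξmeas l) hB, Measure.restrict_apply ((hξmeas l) hB),
      Measure.smul_apply, Measure.map_apply (hξmeas l) hB, smul_eq_mul, Set.inter_comm,
      ← hsP l]
    exact (hind_l l).measure_inter_preimage_eq_mul {l} B (measurableSet_singleton l) hB
  have hZmeas : Measurable Z := by
    have hm : Measurable fun q : Ω × ℕ => ξ q.2 q.1 / p q.2 :=
      measurable_from_prod_countable_left fun n => by exact (hξmeas n).div_const (p n)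
    exact hm.comp (measurable_id.prodMk hL)
  have hZeq : ∀ l, Set.EqOn Z (fun ω => ξ l ω / p l) (s l) := by
    intro l ω hω
    have : L ω = l := hω
    simp only [hZ_def, this]
  -- second moment computation
  have hsq_int : ∀ l, Integrable (fun ω => (ξ l ω / p l) ^ 2) P := by
    intro l
    have := ((hξ2 l).integrable_sq).div_const ((p l) ^ 2)
    refine this.congr (Filter.Eventually.of_forall fun ω => ?_)
    exact (div_pow _ _ _).symm
  have hsq_nn : ∀ l, (0 : ℝ) ≤ ∫ ω, (ξ l ω) ^ 2 ∂P :=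
    fun l => integral_nonneg fun ω => sq_nonneg _
  have hpiece2 : ∀ l, ∫⁻ ω in s l, ENNReal.ofReal (Z ω ^ 2) ∂P
      = ENNReal.ofReal ((∫ ω, (ξ l ω) ^ 2 ∂P) / p l) := by
    intro l
    have hg : Measurable fun x : ℝ => ENNReal.ofReal ((x / p l) ^ 2) :=
      (measurable_id.div_const _).pow_const 2 |>.ennreal_ofReal
    calc ∫⁻ ω in s l, ENNReal.ofReal (Z ω ^ 2) ∂P
        = ∫⁻ ω in s l, ENNReal.ofReal ((ξ l ω / p l) ^ 2) ∂P := by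
          refine setLIntegral_congr_fun (hsmeas l) ?_
          intro ω hω; beta_reduce; rw [hZeq l hω]
      _ = ∫⁻ x, ENNReal.ofReal ((x / p l) ^ 2) ∂(Measure.map (ξ l) (P.restrict (s l))) :=
          (lintegral_map hg (hξmeas l)).symm
      _ = ENNReal.ofReal (p l) * ∫⁻ x, ENNReal.ofReal ((x / p l) ^ 2) ∂(Measure.map (ξ l) P) := by
          rw [map_eq l, lintegral_smul_measure, smul_eq_mul]
      _ = ENNReal.ofReal (p l) * ∫⁻ ω, ENNReal.ofReal ((ξ l ω / p l) ^ 2) ∂P := by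
          rw [lintegral_map hg (hξmeas l)]
      _ = ENNReal.ofReal (p l) * ENNReal.ofReal (∫ ω, (ξ l ω / p l) ^ 2 ∂P) := by
          rw [ofReal_integral_eq_lintegral_ofReal (hsq_int l)
            (Filter.Eventually.of_forall fun ω => sq_nonneg _)]
      _ = ENNReal.ofReal ((∫ ω, (ξ l ω) ^ 2 ∂P) / p l) := by
          rw [← ENNReal.ofReal_mul (hpl l).le]
          congr 1
          have h1 : ∫ ω, (ξ l ω / p l) ^ 2 ∂P = (∫ ω, (ξ l ω) ^ 2 ∂P) / (p l) ^ 2 := by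
            rw [← integral_div]
            exact integral_congr_ae (Filter.Eventually.of_forall fun ω => div_pow _ _ _)
          have key : ∀ x q : ℝ, q ≠ 0 → q * (x / q ^ 2) = x / q := by
            intro x q hq; field_simp
          rw [h1]; exact key _ _ (hpl l).ne'
  have hlin : ∫⁻ ω, ENNReal.ofReal (Z ω ^ 2) ∂P
      = ∑' l, ENNReal.ofReal ((∫ ω, (ξ l ω) ^ 2 ∂P) / p l) := by
    conv_lhs => rw [← Measure.restrict_univ (μ := P), ← hUnion]
    rw [lintegral_iUnion hsmeas hdisj]
    exact tsum_congr hpiece2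
  have hbound : ∀ l : ℕ, (∫ ω, (ξ l ω) ^ 2 ∂P) / p l ≤ (C / (1 - r)) * r ^ l := by
    intro l
    have h1 : (∫ ω, (ξ l ω) ^ 2 ∂P) ≤ C * (r ^ l) ^ 2 := by
      have := hmom l; rwa [hrl l] at this
    have h2 : (∫ ω, (ξ l ω) ^ 2 ∂P) / p l ≤ (C * (r ^ l) ^ 2) / p l :=
      (div_le_div_iff_of_pos_right (hpl l)).mpr h1
    refine h2.trans (le_of_eq ?_)
    have hrLne : r ^ l ≠ 0 := (pow_pos hr0 l).ne'
    have h1r : (1 : ℝ) - r ≠ 0 := by have := hr1; intro h; linarith [sub_eq_zero.mp h]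
    rw [hp_def]
    field_simp
  have hsummable : Summable fun l : ℕ => (C / (1 - r)) * r ^ l :=
    (summable_geometric_of_lt_one hr0.le hr1).mul_left _
  have hfin : ∫⁻ ω, ENNReal.ofReal (Z ω ^ 2) ∂P < ⊤ := by
    rw [hlin]
    have hle : ∑' l, ENNReal.ofReal ((∫ ω, (ξ l ω) ^ 2 ∂P) / p l)
        ≤ ∑' l, ENNReal.ofReal ((C / (1 - r)) * r ^ l) :=
      ENNReal.tsum_le_tsum fun l => ENNReal.ofReal_le_ofReal (hbound l)
    have hnn : ∀ l : ℕ, (0 : ℝ) ≤ (C / (1 - r)) * r ^ l := by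
      intro l
      have : (0:ℝ) < 1 - r := by linarith
      positivity
    have : ∑' l, ENNReal.ofReal ((C / (1 - r)) * r ^ l)
        = ENNReal.ofReal (∑' l, (C / (1 - r)) * r ^ l) :=
      (ENNReal.ofReal_tsum_of_nonneg hnn hsummable).symm
    exact lt_of_le_of_lt hle (this ▸ ENNReal.ofReal_lt_top)
  have hmemp : MemLp Z 2 P := by
    refine (memLp_two_iff_integrable_sq hZmeas.aestronglyMeasurable).mpr ?_
    refine ⟨(hZmeas.pow_const 2).aestronglyMeasurable, ?_⟩
    rw [hasFiniteIntegral_iff_ofReal (Filter.Eventually.of_forall fun ω => sq_nonneg _)]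
    exact hfin
  refine ⟨hmemp, ?_⟩
  have hZint : Integrable Z P := hmemp.integrable one_le_two
  have hpiece : ∀ l, ∫ ω in s l, Z ω ∂P = ∫ ω, ξ l ω ∂P := by
    intro l
    have hgm : AEStronglyMeasurable (fun x : ℝ => x / p l) (Measure.map (ξ l) (P.restrict (s l))) :=
      (measurable_id.div_const _).aestronglyMeasurable
    have hgm' : AEStronglyMeasurable (fun x : ℝ => x / p l) (Measure.map (ξ l) P) :=
      (measurable_id.div_const _).aestronglyMeasurable
    calc ∫ ω in s l, Z ω ∂P = ∫ ω in s l, ξ l ω / p l ∂P :=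
          setIntegral_congr_fun (hsmeas l) (hZeq l)
      _ = ∫ x, x / p l ∂(Measure.map (ξ l) (P.restrict (s l))) :=
          (integral_map (hξmeas l).aemeasurable hgm).symm
      _ = (ENNReal.ofReal (p l)).toReal • ∫ x, x / p l ∂(Measure.map (ξ l) P) := by
          rw [map_eq l, integral_smul_measure]
      _ = p l * ((∫ ω, ξ l ω ∂P) / p l) := by
          rw [ENNReal.toReal_ofReal (hpl l).le, integral_map (hξmeas l).aemeasurable hgm',
            integral_div, smul_eq_mul]
      _ = ∫ ω, ξ l ω ∂P := by
          rw [← mul_div_assoc, mul_div_cancel_left₀ _ (hpl l).ne']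
  have hsum : HasSum (fun l => ∫ ω, ξ l ω ∂P) (∫ ω, Z ω ∂P) := by
    have hint : IntegrableOn Z (⋃ l, s l) P := by
      rw [hUnion]; exact integrableOn_univ.mpr hZint
    have h := hasSum_integral_iUnion hsmeas hdisj hint
    rw [hUnion, setIntegral_univ] at h
    simpa only [hpiece] using h
  have hpart : ∀ n : ℕ, ∑ i ∈ Finset.range (n + 1), ∫ ω, ξ i ω ∂P = a n := by
    intro n
    induction n with
    | zero => simpa using ha0
    | succ n ih =>
      rw [Finset.sum_range_succ, ih, hainc (n + 1) (by omega)]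
      simp
  have htend : Tendsto (fun n => ∑ i ∈ Finset.range (n + 1), ∫ ω, ξ i ω ∂P)
      atTop (nhds (∫ ω, Z ω ∂P)) :=
    hsum.tendsto_sum_nat.comp (tendsto_add_atTop_nat 1)
  have htend' : Tendsto a atTop (nhds (∫ ω, Z ω ∂P)) := by
    refine htend.congr fun n => hpart n
  exact tendsto_nhds_unique htend' halim
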